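/- (Mixture IS second-moment bound) Let $p$ be the density of $N(\lambda,\Sigma)$ and $\tilde p = \sum_j \alpha_j \phi(\cdot; a_j, \Sigma)$ a finite Gaussian mixture with $\alpha_j > 0$, $\sum_j \alpha_j = 1$. Suppose $S = \bigcup_j S^j$ with $S^j$ disjoint and $S^j \subset \{x : (a_j - \lambda)^T\Sigma^{-1}(x - a_j) \geq 0\}$. Then with $L = p/\tilde p$, $E_{\tilde p}[L(X)^2 I(X \in S)] \leq \sum_j e^{-(a_j-\lambda)^T\Sigma^{-1}(a_j-\lambda)}/\alpha_j$. -/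

import Mathlib

open MeasureTheory Matrix

/-- The density of `N(m, Σ)` on `ℝ^d` (with respect to Lebesgue measure). -/
noncomputable def gaussDensity {d : ℕ} (m : Fin d → ℝ) (Sig : Matrix (Fin d) (Fin d) ℝ)
    (x : Fin d → ℝ) : ℝ :=
  (2 * Real.pi) ^ (-(d : ℝ) / 2) * Sig.det ^ (-(1 : ℝ) / 2) *
    Real.exp (-(1 / 2) * ((x - m) ⬝ᵥ (Sig⁻¹ *ᵥ (x - m))))

lemma aux_cov {d : ℕ} (A : Matrix (Fin d) (Fin d) ℝ) (hA : A.det ≠ 0) (g : (Fin d → ℝ) → ℝ) :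
    ∫ y, g (A *ᵥ y) = |A.det|⁻¹ * ∫ x, g x := by
  have hinv : Invertible A := A.invertibleOfIsUnitDet hA.isUnit
  let e : (Fin d → ℝ) ≃ₗ[ℝ] (Fin d → ℝ) := Matrix.toLinearEquiv' A hinv
  let ce := e.toContinuousLinearEquiv
  let me : (Fin d → ℝ) ≃ᵐ (Fin d → ℝ) := ce.toHomeomorph.toMeasurableEquiv
  have hdet : LinearMap.det (Matrix.toLin' A) = A.det := LinearMap.det_toLin' A
  have hmap : (volume : Measure (Fin d → ℝ)).map me
      = ENNReal.ofReal |A.det⁻¹| • volume := by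
    have : (me : (Fin d → ℝ) → (Fin d → ℝ)) = (Matrix.toLin' A : (Fin d → ℝ) →ₗ[ℝ] _) := rfl
    rw [this, Measure.map_linearMap_addHaar_eq_smul_addHaar volume (by rw [hdet]; exact hA), hdet]
  have h1 : ∫ y, g (A *ᵥ y) = ∫ z, g z ∂((volume : Measure (Fin d → ℝ)).map me) := by
    rw [MeasureTheory.integral_map_equiv]; rfl
  rw [h1, hmap, integral_smul_measure, ENNReal.toReal_ofReal (abs_nonneg _), abs_inv]
  rfl

lemma aux_cov_int {d : ℕ} (A : Matrix (Fin d) (Fin d) ℝ) (hA : A.det ≠ 0)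
    (g : (Fin d → ℝ) → ℝ) (h : Integrable (fun y => g (A *ᵥ y))) : Integrable g := by
  have hinv : Invertible A := A.invertibleOfIsUnitDet hA.isUnit
  let e : (Fin d → ℝ) ≃ₗ[ℝ] (Fin d → ℝ) := Matrix.toLinearEquiv' A hinv
  let ce := e.toContinuousLinearEquiv
  let me : (Fin d → ℝ) ≃ᵐ (Fin d → ℝ) := ce.toHomeomorph.toMeasurableEquiv
  have hdet : LinearMap.det (Matrix.toLin' A) = A.det := LinearMap.det_toLin' A
  have hmap : (volume : Measure (Fin d → ℝ)).map me
      = ENNReal.ofReal |A.det⁻¹| • volume := by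
    have : (me : (Fin d → ℝ) → (Fin d → ℝ)) = (Matrix.toLin' A : (Fin d → ℝ) →ₗ[ℝ] _) := rfl
    rw [this, Measure.map_linearMap_addHaar_eq_smul_addHaar volume (by rw [hdet]; exact hA), hdet]
  have h2 : Integrable g ((volume : Measure (Fin d → ℝ)).map me) :=
    (integrable_map_equiv me g).mpr h
  rw [hmap, integrable_smul_measure (by simp [hA]) (by simp)] at h2
  exact h2

lemma prod_form {d : ℕ} (y : Fin d → ℝ) :
    Real.exp (-(1/2 : ℝ) * (y ⬝ᵥ y)) = ∏ i, Real.exp (-(1/2) * (y i)^2) := by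
  rw [← Real.exp_sum]
  congr 1
  rw [dotProduct, Finset.mul_sum]
  congr 1; ext i; ring

lemma int_std {d : ℕ} :
    ∫ y : Fin d → ℝ, Real.exp (-(1/2 : ℝ) * (y ⬝ᵥ y)) = Real.sqrt (2 * Real.pi) ^ d := by
  simp_rw [prod_form]
  rw [MeasureTheory.integral_fintype_prod_volume_eq_pow (ι := Fin d) (fun t : ℝ => Real.exp (-(1/2) * t^2))]
  have : ∫ t : ℝ, Real.exp (-(1/2 : ℝ) * t^2) = Real.sqrt (2 * Real.pi) := by
    rw [integral_gaussian (1/2)]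
    congr 1; ring
  rw [this, Fintype.card_fin]

lemma intgr_std {d : ℕ} :
    Integrable (fun y : Fin d → ℝ => Real.exp (-(1/2 : ℝ) * (y ⬝ᵥ y))) := by
  simp_rw [prod_form]
  exact MeasureTheory.Integrable.fintype_prod
    (f := fun (_ : Fin d) (t : ℝ) => Real.exp (-(1/2) * t^2))
    (fun i => integrable_exp_neg_mul_sq (by norm_num))

open scoped MatrixOrder in
lemma gaussDensity_integrable {d : ℕ} (m : Fin d → ℝ) (Sig : Matrix (Fin d) (Fin d) ℝ)
    (hpd : Sig.PosDef) : Integrable (gaussDensity m Sig) := by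
  set A := CFC.sqrt Sig with hAdef
  have hAA : A * A = Sig := CFC.sqrt_mul_sqrt_self Sig hpd.posSemidef.nonneg
  have hsym : Aᵀ = A := by
    have := (Matrix.nonneg_iff_posSemidef.mp (CFC.sqrt_nonneg Sig)).1
    simpa [Matrix.IsHermitian, Matrix.conjTranspose_eq_transpose_of_trivial] using this
  have hdet2 : A.det * A.det = Sig.det := by rw [← Matrix.det_mul, hAA]
  have hdetpos : 0 < Sig.det := hpd.det_pos
  have hdetA : A.det ≠ 0 := by
    intro h; rw [h, mul_zero] at hdet2; exact hdetpos.ne (by linarith)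
  have hone : A * Sig⁻¹ * A = 1 := by
    have hSiginv : Sig⁻¹ = A⁻¹ * A⁻¹ := by rw [← hAA, Matrix.mul_inv_rev]
    rw [hSiginv, ← Matrix.mul_assoc, Matrix.mul_assoc (A * A⁻¹),
      Matrix.mul_nonsing_inv A hdetA.isUnit, Matrix.nonsing_inv_mul A hdetA.isUnit,
      Matrix.one_mul]
  have key : ∀ y : Fin d → ℝ, (A *ᵥ y) ⬝ᵥ (Sig⁻¹ *ᵥ (A *ᵥ y)) = y ⬝ᵥ y := by
    intro y
    rw [Matrix.mulVec_mulVec, Matrix.dotProduct_mulVec, Matrix.vecMul_mulVec, hsym,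
      ← Matrix.mul_assoc, hone, Matrix.vecMul_one]
  set g : (Fin d → ℝ) → ℝ := fun z => Real.exp (-(1/2 : ℝ) * (z ⬝ᵥ (Sig⁻¹ *ᵥ z))) with hg
  have hgA : (fun y => g (A *ᵥ y)) = fun y : Fin d → ℝ => Real.exp (-(1/2 : ℝ) * (y ⬝ᵥ y)) := by
    funext y; rw [hg]; simp only; rw [key]
  have hgint : Integrable g := aux_cov_int A hdetA g (by rw [hgA]; exact intgr_std)
  have hgm : Integrable (fun x => g (x - m)) := hgint.comp_sub_right m
  have : gaussDensity m Sig
      = fun x => ((2 * Real.pi) ^ (-(d : ℝ) / 2) * Sig.det ^ (-(1 : ℝ) / 2)) * g (x - m) := by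
    funext x; rfl
  rw [this]
  exact hgm.const_mul _

open scoped MatrixOrder in
lemma gaussDensity_integral {d : ℕ} (m : Fin d → ℝ) (Sig : Matrix (Fin d) (Fin d) ℝ)
    (hpd : Sig.PosDef) : ∫ x, gaussDensity m Sig x = 1 := by
  set A := CFC.sqrt Sig with hAdef
  have hAA : A * A = Sig := CFC.sqrt_mul_sqrt_self Sig hpd.posSemidef.nonneg
  have hsym : Aᵀ = A := by
    have := (Matrix.nonneg_iff_posSemidef.mp (CFC.sqrt_nonneg Sig)).1
    simpa [Matrix.IsHermitian, Matrix.conjTranspose_eq_transpose_of_trivial] using this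
  have hdet2 : A.det * A.det = Sig.det := by rw [← Matrix.det_mul, hAA]
  have hdetpos : 0 < Sig.det := hpd.det_pos
  have hdetA : A.det ≠ 0 := by
    intro h; rw [h, mul_zero] at hdet2; exact hdetpos.ne (by linarith)
  have hdetA_eq : |A.det| = Real.sqrt Sig.det := by
    rw [← hdet2, Real.sqrt_mul_self_eq_abs]
  have hone : A * Sig⁻¹ * A = 1 := by
    have hSiginv : Sig⁻¹ = A⁻¹ * A⁻¹ := by rw [← hAA, Matrix.mul_inv_rev]
    rw [hSiginv, ← Matrix.mul_assoc, Matrix.mul_assoc (A * A⁻¹),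
      Matrix.mul_nonsing_inv A hdetA.isUnit, Matrix.nonsing_inv_mul A hdetA.isUnit,
      Matrix.one_mul]
  have key : ∀ y : Fin d → ℝ, (A *ᵥ y) ⬝ᵥ (Sig⁻¹ *ᵥ (A *ᵥ y)) = y ⬝ᵥ y := by
    intro y
    rw [Matrix.mulVec_mulVec, Matrix.dotProduct_mulVec, Matrix.vecMul_mulVec, hsym,
      ← Matrix.mul_assoc, hone, Matrix.vecMul_one]
  set g : (Fin d → ℝ) → ℝ := fun z => Real.exp (-(1/2 : ℝ) * (z ⬝ᵥ (Sig⁻¹ *ᵥ z))) with hg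
  have hgA : (fun y => g (A *ᵥ y)) = fun y : Fin d → ℝ => Real.exp (-(1/2 : ℝ) * (y ⬝ᵥ y)) := by
    funext y; rw [hg]; simp only; rw [key]
  have hcov : ∫ y, g (A *ᵥ y) = |A.det|⁻¹ * ∫ x, g x := aux_cov A hdetA g
  have hintg : ∫ x, g x = |A.det| * Real.sqrt (2 * Real.pi) ^ d := by
    have h2 : ∫ y, g (A *ᵥ y) = Real.sqrt (2 * Real.pi) ^ d := by
      rw [hgA]; exact int_std
    rw [h2] at hcov
    field_simp at hcov ⊢
    linarith [hcov]
  calc ∫ x, gaussDensity m Sig x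
      = ∫ x, ((2 * Real.pi) ^ (-(d : ℝ) / 2) * Sig.det ^ (-(1 : ℝ) / 2)) * g (x - m) := rfl
    _ = ((2 * Real.pi) ^ (-(d : ℝ) / 2) * Sig.det ^ (-(1 : ℝ) / 2)) * ∫ x, g (x - m) := by
        rw [integral_const_mul]
    _ = ((2 * Real.pi) ^ (-(d : ℝ) / 2) * Sig.det ^ (-(1 : ℝ) / 2)) * ∫ x, g x := by
        rw [integral_sub_right_eq_self g m]
    _ = ((2 * Real.pi) ^ (-(d : ℝ) / 2) * Sig.det ^ (-(1 : ℝ) / 2))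
        * (Real.sqrt Sig.det * Real.sqrt (2 * Real.pi) ^ d) := by
        rw [hintg, hdetA_eq]
    _ = 1 := by
        have h2pi : (0:ℝ) < 2 * Real.pi := by positivity
        rw [Real.sqrt_eq_rpow, Real.sqrt_eq_rpow, ← Real.rpow_natCast ((2*Real.pi) ^ ((1:ℝ)/2)) d,
          ← Real.rpow_mul h2pi.le]
        rw [show ((2 * Real.pi) ^ (-(d : ℝ) / 2) * Sig.det ^ (-(1 : ℝ) / 2))
            * (Sig.det ^ ((1:ℝ)/2) * (2*Real.pi) ^ ((1:ℝ)/2 * (d:ℝ)))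
            = ((2 * Real.pi) ^ (-(d : ℝ) / 2) * (2*Real.pi) ^ ((1:ℝ)/2 * (d:ℝ)))
            * (Sig.det ^ (-(1 : ℝ) / 2) * Sig.det ^ ((1:ℝ)/2)) from by ring,
          ← Real.rpow_add h2pi, ← Real.rpow_add hdetpos,
          show -(d:ℝ)/2 + 1/2 * (d:ℝ) = 0 by ring]
        norm_num

lemma gaussDensity_pos {d : ℕ} (m : Fin d → ℝ) {Sig : Matrix (Fin d) (Fin d) ℝ}
    (hpd : Sig.PosDef) (x : Fin d → ℝ) : 0 < gaussDensity m Sig x := by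
  unfold gaussDensity
  have h1 : (0:ℝ) < 2 * Real.pi := by positivity
  have h2 : (0:ℝ) < Sig.det := hpd.det_pos
  positivity

lemma gaussDensity_continuous {d : ℕ} (m : Fin d → ℝ) (Sig : Matrix (Fin d) (Fin d) ℝ) :
    Continuous (gaussDensity m Sig) := by
  unfold gaussDensity
  simp only [dotProduct, Matrix.mulVec]
  fun_prop

/-- Mixture IS second-moment bound: with target `p = N(λ,Σ)`, mixture proposal
`p̃ = ∑ⱼ αⱼ φ(·; aⱼ, Σ)`, and `S = ⋃ⱼ Sʲ` with the `Sʲ` disjoint and each `Sʲ` inside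
the half-space `{x : (aⱼ-λ)ᵀΣ⁻¹(x-aⱼ) ≥ 0}`, the second moment of `L·I_S` under `p̃`
is at most `∑ⱼ e^{-(aⱼ-λ)ᵀΣ⁻¹(aⱼ-λ)}/αⱼ`. -/
theorem stmt13 {d m : ℕ} (lam : Fin d → ℝ) (Sig : Matrix (Fin d) (Fin d) ℝ)
    (hpd : Sig.PosDef) (a : Fin m → (Fin d → ℝ)) (α : Fin m → ℝ)
    (hα : ∀ j, 0 < α j) (hsum : ∑ j, α j = 1)
    (S : Fin m → Set (Fin d → ℝ)) (hSmeas : ∀ j, MeasurableSet (S j))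
    (hdisj : Pairwise (Function.onFun Disjoint S))
    (hdom : ∀ j, ∀ x ∈ S j, 0 ≤ (a j - lam) ⬝ᵥ (Sig⁻¹ *ᵥ (x - a j))) :
    (∫ x in ⋃ j, S j,
        (gaussDensity lam Sig x / ∑ j, α j * gaussDensity (a j) Sig x) ^ 2 *
          (∑ j, α j * gaussDensity (a j) Sig x)) ≤
      ∑ j, Real.exp (-((a j - lam) ⬝ᵥ (Sig⁻¹ *ᵥ (a j - lam)))) / α j := by
  classical
  have hne : Nonempty (Fin m) := by
    by_contra h
    rw [not_nonempty_iff] at h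
    rw [Finset.univ_eq_empty, Finset.sum_empty] at hsum
    exact one_ne_zero hsum.symm
  have hφpos : ∀ j x, 0 < gaussDensity (a j) Sig x := fun j x => gaussDensity_pos _ hpd x
  have hppos : ∀ x, 0 < gaussDensity lam Sig x := fun x => gaussDensity_pos _ hpd x
  have hqpos : ∀ x, 0 < ∑ j, α j * gaussDensity (a j) Sig x := fun x =>
    Finset.sum_pos (fun j _ => mul_pos (hα j) (hφpos j x)) Finset.univ_nonempty
  set F : (Fin d → ℝ) → ℝ := fun x =>
    (gaussDensity lam Sig x / ∑ j, α j * gaussDensity (a j) Sig x) ^ 2 *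
      (∑ j, α j * gaussDensity (a j) Sig x) with hFdef
  set c : Fin m → ℝ :=
    fun j => Real.exp (-((a j - lam) ⬝ᵥ (Sig⁻¹ *ᵥ (a j - lam)))) / α j with hcdef
  have hcnn : ∀ j, 0 ≤ c j := fun j => div_nonneg (Real.exp_nonneg _) (hα j).le
  set G : Fin m → (Fin d → ℝ) → ℝ := fun j x => c j * gaussDensity (a j) Sig x with hGdef
  have hFnonneg : ∀ x, 0 ≤ F x := fun x => mul_nonneg (sq_nonneg _) (hqpos x).le
  -- symmetry of Sig⁻¹
  have hsyminv : (Sig⁻¹)ᵀ = Sig⁻¹ := by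
    rw [Matrix.transpose_nonsing_inv]
    congr 1
    have := hpd.1
    simpa [Matrix.IsHermitian, Matrix.conjTranspose_eq_transpose_of_trivial] using this
  have hswap : ∀ v w : Fin d → ℝ, v ⬝ᵥ (Sig⁻¹ *ᵥ w) = w ⬝ᵥ (Sig⁻¹ *ᵥ v) := by
    intro v w
    conv_lhs => rw [Matrix.dotProduct_mulVec, ← hsyminv, Matrix.vecMul_transpose]
    rw [dotProduct_comm]
  -- pointwise bound on S j
  have hbound : ∀ j, ∀ x ∈ S j, F x ≤ G j x := by
    intro j x hx
    have hφx := hφpos j x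
    have hpx := hppos x
    have hqx := hqpos x
    have hquad : (x - lam) ⬝ᵥ (Sig⁻¹ *ᵥ (x - lam))
        = (x - a j) ⬝ᵥ (Sig⁻¹ *ᵥ (x - a j))
          + 2 * ((a j - lam) ⬝ᵥ (Sig⁻¹ *ᵥ (x - a j)))
          + (a j - lam) ⬝ᵥ (Sig⁻¹ *ᵥ (a j - lam)) := by
      have hxl : x - lam = (x - a j) + (a j - lam) := by abel
      rw [hxl, Matrix.mulVec_add, add_dotProduct, dotProduct_add,
        dotProduct_add, hswap (x - a j) (a j - lam)]
      ring
    have hdom' := hdom j x hx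
    have hstep1 : gaussDensity lam Sig x
        ≤ Real.exp (-(1/2) * ((a j - lam) ⬝ᵥ (Sig⁻¹ *ᵥ (a j - lam))))
          * gaussDensity (a j) Sig x := by
      unfold gaussDensity
      have hC : (0:ℝ) ≤ (2 * Real.pi) ^ (-(d : ℝ) / 2) * Sig.det ^ (-(1 : ℝ) / 2) := by
        have h1 : (0:ℝ) < 2 * Real.pi := by positivity
        have h2 : (0:ℝ) < Sig.det := hpd.det_pos
        positivity
      have hexp : Real.exp (-(1/2 : ℝ) * ((x - lam) ⬝ᵥ (Sig⁻¹ *ᵥ (x - lam))))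
          ≤ Real.exp (-(1/2) * ((a j - lam) ⬝ᵥ (Sig⁻¹ *ᵥ (a j - lam))))
            * Real.exp (-(1/2) * ((x - a j) ⬝ᵥ (Sig⁻¹ *ᵥ (x - a j)))) := by
        rw [← Real.exp_add]
        apply Real.exp_le_exp.mpr
        rw [hquad]
        linarith
      calc (2 * Real.pi) ^ (-(d : ℝ) / 2) * Sig.det ^ (-(1 : ℝ) / 2) *
            Real.exp (-(1/2 : ℝ) * ((x - lam) ⬝ᵥ (Sig⁻¹ *ᵥ (x - lam))))
          ≤ (2 * Real.pi) ^ (-(d : ℝ) / 2) * Sig.det ^ (-(1 : ℝ) / 2) *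
            (Real.exp (-(1/2) * ((a j - lam) ⬝ᵥ (Sig⁻¹ *ᵥ (a j - lam))))
              * Real.exp (-(1/2) * ((x - a j) ⬝ᵥ (Sig⁻¹ *ᵥ (x - a j))))) :=
            mul_le_mul_of_nonneg_left hexp hC
        _ = Real.exp (-(1/2) * ((a j - lam) ⬝ᵥ (Sig⁻¹ *ᵥ (a j - lam))))
            * ((2 * Real.pi) ^ (-(d : ℝ) / 2) * Sig.det ^ (-(1 : ℝ) / 2) *
              Real.exp (-(1/2) * ((x - a j) ⬝ᵥ (Sig⁻¹ *ᵥ (x - a j))))) := by ring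
    have hstep2 : gaussDensity lam Sig x ^ 2
        ≤ Real.exp (-((a j - lam) ⬝ᵥ (Sig⁻¹ *ᵥ (a j - lam))))
          * gaussDensity (a j) Sig x ^ 2 := by
      have hsq := mul_self_le_mul_self hpx.le hstep1
      have he : Real.exp (-(1/2 : ℝ) * ((a j - lam) ⬝ᵥ (Sig⁻¹ *ᵥ (a j - lam))))
          * Real.exp (-(1/2 : ℝ) * ((a j - lam) ⬝ᵥ (Sig⁻¹ *ᵥ (a j - lam))))
          = Real.exp (-((a j - lam) ⬝ᵥ (Sig⁻¹ *ᵥ (a j - lam)))) := by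
        rw [← Real.exp_add]; ring_nf
      calc gaussDensity lam Sig x ^ 2 = gaussDensity lam Sig x * gaussDensity lam Sig x := sq _
        _ ≤ (Real.exp (-(1/2) * ((a j - lam) ⬝ᵥ (Sig⁻¹ *ᵥ (a j - lam))))
              * gaussDensity (a j) Sig x)
            * (Real.exp (-(1/2) * ((a j - lam) ⬝ᵥ (Sig⁻¹ *ᵥ (a j - lam))))
              * gaussDensity (a j) Sig x) := hsq
        _ = Real.exp (-((a j - lam) ⬝ᵥ (Sig⁻¹ *ᵥ (a j - lam))))
            * gaussDensity (a j) Sig x ^ 2 := by rw [← he]; ring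
    have hqge : α j * gaussDensity (a j) Sig x ≤ ∑ k, α k * gaussDensity (a k) Sig x :=
      Finset.single_le_sum (fun k _ => (mul_pos (hα k) (hφpos k x)).le) (Finset.mem_univ j)
    have hF_eq : F x = gaussDensity lam Sig x ^ 2 / (∑ k, α k * gaussDensity (a k) Sig x) := by
      rw [hFdef]
      field_simp
    rw [hF_eq, hGdef]
    calc gaussDensity lam Sig x ^ 2 / (∑ k, α k * gaussDensity (a k) Sig x)
        ≤ gaussDensity lam Sig x ^ 2 / (α j * gaussDensity (a j) Sig x) := by
          gcongr
          exact mul_pos (hα j) hφx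
      _ ≤ (Real.exp (-((a j - lam) ⬝ᵥ (Sig⁻¹ *ᵥ (a j - lam))))
            * gaussDensity (a j) Sig x ^ 2) / (α j * gaussDensity (a j) Sig x) := by
          gcongr
          exact (mul_pos (hα j) hφx).le
      _ = c j * gaussDensity (a j) Sig x := by
          rw [hcdef]
          have hgen : ∀ e av fv : ℝ, av ≠ 0 → fv ≠ 0 →
              (e * fv ^ 2) / (av * fv) = e / av * fv := by
            intro e av fv h1 h2
            field_simp
          exact hgen _ _ _ (hα j).ne' hφx.ne'
  -- integrability
  have hGint : ∀ j, Integrable (G j) := fun j =>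
    (gaussDensity_integrable (a j) Sig hpd).const_mul _
  have hqcont : Continuous (fun x => ∑ j, α j * gaussDensity (a j) Sig x) :=
    continuous_finset_sum _ (fun j _ => continuous_const.mul (gaussDensity_continuous (a j) Sig))
  have hFcont : Continuous F := by
    rw [hFdef]
    exact (((gaussDensity_continuous lam Sig).div hqcont
      (fun x => (hqpos x).ne')).pow 2).mul hqcont
  have hFS : ∀ j, IntegrableOn F (S j) := by
    intro j
    refine Integrable.mono' ((hGint j).integrableOn) hFcont.aestronglyMeasurable.restrict ?_
    rw [ae_restrict_iff' (hSmeas j)]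
    exact ae_of_all _ (fun x hx => by
      rw [Real.norm_eq_abs, abs_of_nonneg (hFnonneg x)]; exact hbound j x hx)
  have hFU : IntegrableOn F (⋃ j, S j) := integrableOn_finite_iUnion.mpr hFS
  calc (∫ x in ⋃ j, S j, F x) = ∑' j, ∫ x in S j, F x :=
        integral_iUnion hSmeas hdisj hFU
    _ = ∑ j, ∫ x in S j, F x := tsum_fintype _
    _ ≤ ∑ j, c j := by
        refine Finset.sum_le_sum (fun j _ => ?_)
        calc (∫ x in S j, F x) ≤ ∫ x in S j, G j x :=
              setIntegral_mono_on (hFS j) ((hGint j).integrableOn) (hSmeas j) (hbound j)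
          _ ≤ ∫ x, G j x := setIntegral_le_integral (hGint j)
              (ae_of_all _ (fun x => mul_nonneg (hcnn j) (hφpos j x).le))
          _ = c j * ∫ x, gaussDensity (a j) Sig x := by rw [hGdef]; exact integral_const_mul _ _
          _ = c j := by rw [gaussDensity_integral (a j) Sig hpd, mul_one]
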